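/- Let f = {f_1,...,f_m} be monomials of degree 2 in R = k[x_1,...,x_n], and let w = {g_1,...,g_{2r}} be an even closed walk in the graph G(f). Let g = lcm of the distinct monomials among g_1,...,g_{2r}. Then the alternating vector (g/g_1, −g/g_2, g/g_3, ..., −g/g_{2r}) is a syzygy of the differentials dg_1,...,dg_{2r}, i.e., Σ_{j=1}^{2r} (−1)^{j+1} (g/g_j) dg_j = 0 in the free module ⊕_{i=1}^n R dx_i, where d(x_a x_b) = x_b dx_a + x_a dx_b. -/

import Mathlib

noncomputable section

namespace PolarAlg

open MvPolynomial

variable (k : Type*) [Field k]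

/-- The exponent vector of the degree-2 monomial attached to an edge (or loop) `e`. -/
def sym2Exp {n : ℕ} (e : Sym2 (Fin n)) : Fin n → ℕ :=
  Sym2.lift ⟨fun a b i => (if a = i then 1 else 0) + (if b = i then 1 else 0),
    fun a b => funext fun i => add_comm _ _⟩ e

/-- The monomial with exponent vector `g`. -/
def mon {n : ℕ} (g : Fin n → ℕ) : MvPolynomial (Fin n) k := ∏ i, X i ^ g i

/-- The degree-2 monomial `f i` attached to the edge `ε i` of the graph of `f`. -/
def fmon {n : ℕ} {ι : Type*} (ε : ι → Sym2 (Fin n)) (i : ι) : MvPolynomial (Fin n) k :=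
  mon k (sym2Exp (ε i))

/-- `(vtx, eidx)` is an (even, of length `2r`) closed walk in the graph `G(f)` whose edges are
indexed by `ι` via `ε` : the `j`-th edge of the walk is the edge `ε (eidx j)`, joining
`vtx j` and `vtx (j+1)`. -/
def IsWalkIn {n r : ℕ} {ι : Type*} (ε : ι → Sym2 (Fin n)) (vtx : ZMod (2 * r) → Fin n)
    (eidx : ZMod (2 * r) → ι) : Prop :=
  ∀ j, ε (eidx j) = s(vtx j, vtx (j + 1))

/-- The exponent vector of the lcm `g` of the (distinct) edge monomials of a walk. -/
def supExp {n r : ℕ} (vtx : ZMod (2 * r) → Fin n) : Fin n → ℕ := fun l =>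
  (Finset.range (2 * r)).sup fun j =>
    sym2Exp (s(vtx (j : ZMod (2 * r)), vtx ((j : ZMod (2 * r)) + 1))) l

/-- The differential syzygy `z_w` attached to an even closed walk `w = (vtx, eidx)`:
its `i`-th coordinate is the sum of the alternating terms `± g/g_j` over the positions `j`
at which the walk traverses the edge `f i`. -/
def zw {n r : ℕ} {ι : Type*} [DecidableEq ι] (ε : ι → Sym2 (Fin n))
    (vtx : ZMod (2 * r) → Fin n) (eidx : ZMod (2 * r) → ι) : ι → MvPolynomial (Fin n) k :=
  fun i => ∑ j ∈ Finset.range (2 * r),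
    if eidx (j : ZMod (2 * r)) = i then
      (-1 : MvPolynomial (Fin n) k) ^ j * mon k fun l => supExp vtx l - sym2Exp (ε i) l
    else 0

/-- The binomial `p_w = T_{w⁺} - T_{w⁻}` attached to an even closed walk. -/
def pw {r : ℕ} {ι : Type*} (eidx : ZMod (2 * r) → ι) : MvPolynomial ι k :=
  (∏ j ∈ (Finset.range (2 * r)).filter (fun j => Even j), X (eidx (j : ZMod (2 * r)))) -
    ∏ j ∈ (Finset.range (2 * r)).filter (fun j => ¬ Even j), X (eidx (j : ZMod (2 * r)))

/-- The differential syzygy module `Z` of `f`, as the set of syzygies of the transposed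
Jacobian module: vectors `a` with `∑ i, a i · df i = 0`, i.e. `∑ i, a i ∂f i/∂x l = 0`
for every `l`. -/
def Zset (n : ℕ) {ι : Type*} [Fintype ι] (ε : ι → Sym2 (Fin n)) :
    Set (ι → MvPolynomial (Fin n) k) :=
  {a | ∀ l : Fin n, ∑ i, a i * pderiv l (fmon k ε i) = 0}

/-- The generators of the polar syzygy module: the `T`-gradients of the polynomial
relations of `f`, evaluated at `f`. -/
def polarSet (n : ℕ) {ι : Type*} [Fintype ι] (ε : ι → Sym2 (Fin n)) :
    Set (ι → MvPolynomial (Fin n) k) :=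
  {v | ∃ F : MvPolynomial ι k, aeval (fmon k ε) F = 0 ∧
    v = fun i => aeval (fmon k ε) (pderiv i F)}

/-- `f` is polarizable: the polar syzygy module `P` equals the differential syzygy module
`Z` (the inclusion `P ⊆ Z` always holds, by the chain rule). -/
def Polarizable (n : ℕ) {ι : Type*} [Fintype ι] (ε : ι → Sym2 (Fin n)) : Prop :=
  Zset k n ε ⊆ ↑(Submodule.span (MvPolynomial (Fin n) k) (polarSet k n ε))

end PolarAlg


open PolarAlg MvPolynomial in
private lemma PA.mon_eq_monomial (k : Type*) [Field k] {n : ℕ} (e : Fin n → ℕ) :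
    mon k e = monomial (Finsupp.equivFunOnFinite.symm e) 1 := by
  rw [monomial_eq, map_one, one_mul, Finsupp.prod]
  rw [Finset.prod_subset (Finset.subset_univ _)]
  · simp [mon]
  · intro i _ hi
    simp only [Finsupp.notMem_support_iff] at hi
    simp [hi]

open PolarAlg MvPolynomial in
private lemma PA.sym2Exp_apply {n : ℕ} (a b i : Fin n) :
    sym2Exp s(a, b) i = (if a = i then 1 else 0) + (if b = i then 1 else 0) := rfl

open PolarAlg MvPolynomial in
private lemma PA.step (k : Type*) [Field k] {n : ℕ} (g e : Fin n → ℕ)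
    (hge : ∀ i, e i ≤ g i) (l : Fin n) :
    mon k (fun i => g i - e i) * pderiv l (mon k e) =
      ((e l : ℕ) : MvPolynomial (Fin n) k) *
        monomial (Finsupp.equivFunOnFinite.symm g - Finsupp.single l 1) 1 := by
  rw [PA.mon_eq_monomial, PA.mon_eq_monomial, pderiv_monomial, monomial_mul]
  rw [show ((e l : ℕ) : MvPolynomial (Fin n) k) = C ((e l : ℕ) : k) from
    (map_natCast C (e l)).symm, C_mul_monomial, mul_one]
  have hEl : (Finsupp.equivFunOnFinite.symm e) l = e l := rfl
  rw [hEl]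
  simp only [one_mul]
  rcases Nat.eq_zero_or_pos (e l) with h0 | h1
  · rw [h0]; simp
  · have hexp : Finsupp.equivFunOnFinite.symm (fun i => g i - e i) +
        (Finsupp.equivFunOnFinite.symm e - Finsupp.single l 1) =
        Finsupp.equivFunOnFinite.symm g - Finsupp.single l 1 := by
      ext i
      simp only [Finsupp.add_apply, Finsupp.tsub_apply, Finsupp.single_apply,
        Finsupp.coe_equivFunOnFinite_symm]
      have := hge i
      by_cases h : l = i
      · subst h; simp only [if_true]; omega
      · simp only [h, if_false]; omega
    rw [hexp]

open PolarAlg MvPolynomial in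
private lemma PA.scalar {A : Type*} [CommRing A] {n r : ℕ} (hr : 1 ≤ r)
    (vtx : ZMod (2 * r) → Fin n) (l : Fin n) :
    ∑ j ∈ Finset.range (2 * r), (-1 : A) ^ j *
      ((sym2Exp (s(vtx (j : ZMod (2 * r)), vtx ((j : ZMod (2 * r)) + 1))) l : ℕ) : A) = 0 := by
  have h2 : 1 < 2 * r := by omega
  haveI : NeZero (2 * r) := ⟨by omega⟩
  haveI : Fact (1 < 2 * r) := ⟨h2⟩
  set sgn : ZMod (2 * r) → A := fun j => (-1) ^ j.val with hsgn
  have key1 : ∀ a : ℕ, (-1 : A) ^ (a % (2 * r)) = (-1) ^ a := by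
    intro a
    conv_rhs => rw [← Nat.div_add_mod a (2 * r)]
    rw [pow_add, pow_mul, show ((-1 : A) ^ (2 * r)) = 1 by rw [pow_mul]; simp]
    simp
  have key2 : ∀ j : ZMod (2 * r), sgn (j + 1) = -sgn j := by
    intro j
    simp only [hsgn]
    rw [ZMod.val_add, ZMod.val_one _, key1, pow_succ]
    ring
  have conv1 : ∀ G : ZMod (2 * r) → A,
      ∑ j ∈ Finset.range (2 * r), (-1 : A) ^ j * G (j : ZMod (2 * r)) =
        ∑ j : ZMod (2 * r), sgn j * G j := by
    intro G
    apply Finset.sum_bij (fun (j : ℕ) (_ : j ∈ Finset.range (2 * r)) => (j : ZMod (2 * r)))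
    · intro a _; exact Finset.mem_univ _
    · intro a ha b hb hab
      rw [Finset.mem_range] at ha hb
      have := congrArg ZMod.val hab
      rwa [ZMod.val_cast_of_lt ha, ZMod.val_cast_of_lt hb] at this
    · intro b _
      exact ⟨b.val, Finset.mem_range.mpr b.val_lt, ZMod.natCast_rightInverse b⟩
    · intro a ha
      rw [Finset.mem_range] at ha
      simp only [hsgn]
      rw [ZMod.val_cast_of_lt ha]
  rw [conv1 (fun j => ((sym2Exp (s(vtx j, vtx (j + 1))) l : ℕ) : A))]
  have expand : ∀ j : ZMod (2 * r),
      ((sym2Exp (s(vtx j, vtx (j + 1))) l : ℕ) : A) =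
        (if vtx j = l then (1 : A) else 0) + (if vtx (j + 1) = l then 1 else 0) := by
    intro j
    rw [PA.sym2Exp_apply]
    push_cast
    rfl
  simp only [expand, mul_add, Finset.sum_add_distrib]
  have shift : ∑ j : ZMod (2 * r), sgn j * (if vtx (j + 1) = l then (1 : A) else 0) =
      ∑ j : ZMod (2 * r), -sgn j * (if vtx j = l then (1 : A) else 0) := by
    rw [← Equiv.sum_comp (Equiv.addRight (1 : ZMod (2 * r)))
      (fun j => -sgn j * (if vtx j = l then (1 : A) else 0))]
    apply Finset.sum_congr rfl
    intro j _
    simp only [Equiv.coe_addRight]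
    rw [key2 j]
    ring
  rw [shift, ← Finset.sum_add_distrib]
  apply Finset.sum_eq_zero
  intro x _
  by_cases h : vtx x = l <;> simp [h]

open PolarAlg MvPolynomial in
/-- Lemma 4.1: for an even closed walk `w = {g_1,…,g_{2r}}` in the graph `G(f)` of a set `f`
of degree-2 monomials, and `g` the lcm of the distinct monomials of the walk, the alternating
vector `(g/g_1, -g/g_2, …, -g/g_{2r})` is a syzygy of the differentials `dg_1,…,dg_{2r}`:
`∑_j (-1)^{j+1} (g/g_j) dg_j = 0` coordinatewise in `⊕_l R dx_l`. -/
theorem walk_gives_differential_syzygy (k : Type*) [Field k] [CharZero k] {n r : ℕ}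
    (hr : 1 ≤ r) (f : Set (MvPolynomial (Fin n) k)) (vtx : ZMod (2 * r) → Fin n)
    (hf : ∀ j : ZMod (2 * r), mon k (sym2Exp s(vtx j, vtx (j + 1))) ∈ f) :
    ∀ l : Fin n,
      ∑ j ∈ Finset.range (2 * r),
        (-1 : MvPolynomial (Fin n) k) ^ j *
          (mon k (fun i => supExp vtx i -
              sym2Exp (s(vtx (j : ZMod (2 * r)), vtx ((j : ZMod (2 * r)) + 1))) i) *
            pderiv l (mon k (sym2Exp (s(vtx (j : ZMod (2 * r)),
              vtx ((j : ZMod (2 * r)) + 1)))))) = 0 := by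
  intro l
  have h1 : ∀ j ∈ Finset.range (2 * r),
      (-1 : MvPolynomial (Fin n) k) ^ j *
        (mon k (fun i => supExp vtx i -
            sym2Exp (s(vtx (j : ZMod (2 * r)), vtx ((j : ZMod (2 * r)) + 1))) i) *
          pderiv l (mon k (sym2Exp (s(vtx (j : ZMod (2 * r)), vtx ((j : ZMod (2 * r)) + 1)))))) =
      ((-1 : MvPolynomial (Fin n) k) ^ j *
          ((sym2Exp (s(vtx (j : ZMod (2 * r)), vtx ((j : ZMod (2 * r)) + 1))) l : ℕ) :
            MvPolynomial (Fin n) k)) *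
        monomial (Finsupp.equivFunOnFinite.symm (supExp vtx) - Finsupp.single l 1) 1 := by
    intro j hj
    rw [PA.step k (supExp vtx)
      (sym2Exp (s(vtx (j : ZMod (2 * r)), vtx ((j : ZMod (2 * r)) + 1))))
      (fun i => Finset.le_sup (f := fun j : ℕ => sym2Exp
        (s(vtx (j : ZMod (2 * r)), vtx ((j : ZMod (2 * r)) + 1))) i) hj) l]
    ring
  rw [Finset.sum_congr rfl h1, ← Finset.sum_mul, PA.scalar hr vtx l, zero_mul]
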